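/- Let c_n ∈ ⊕_{i∈ℤ} ℤ/2 be the dyadic encoding of n: c_n(i) is the i-th binary digit of n for i ≥ 0 and c_n(i) = 0 for i < 0. Then the map n ↦ (c_n, 0) ∈ L = ℤ/2 ≀ ℤ satisfies: the word distance d((c_n,0), (c_{n+1},0)) ≤ 4·(⌊log₂(n+1)⌋ + 1) + 2, since c_n and c_{n+1} differ exactly at positions 0,…,k where k is the position of the lowest 0-bit of n. -/

import Mathlib

noncomputable section

/-- The shift automorphism of the base group `ℤ →₀ ZMod 2`. -/
def lampShift : (ℤ →₀ ZMod 2) ≃+ (ℤ →₀ ZMod 2) :=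
  Finsupp.domCongr (Equiv.addRight (1 : ℤ))

/-- The action of `ℤ` on the base group by shifting. -/
def lampAct : Multiplicative ℤ →* MulAut (Multiplicative (ℤ →₀ ZMod 2)) :=
  zpowersHom _ (AddEquiv.toMultiplicative lampShift)

/-- The lamplighter group `ℤ/2 ≀ ℤ`. -/
abbrev Lamp : Type :=
  (Multiplicative (ℤ →₀ ZMod 2)) ⋊[lampAct] (Multiplicative ℤ)

/-- The element `a = (δ₀, 0)`. -/
def lampA : Lamp := SemidirectProduct.inl (Multiplicative.ofAdd (Finsupp.single (0 : ℤ) (1 : ZMod 2)))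

/-- The element `t = (0, 1)`. -/
def lampT : Lamp := SemidirectProduct.inr (Multiplicative.ofAdd (1 : ℤ))

/-- The element `(c, k)` of the lamplighter group. -/
def lampElt (c : ℤ →₀ ZMod 2) (k : ℤ) : Lamp :=
  SemidirectProduct.inl (Multiplicative.ofAdd c) * SemidirectProduct.inr (Multiplicative.ofAdd k)

/-- Word length with respect to a generating set `S` (inverses allowed). -/
def wordLength {G : Type*} [Group G] (S : Set G) (g : G) : ℕ :=
  sInf {n | ∃ l : List G, l.length = n ∧ (∀ x ∈ l, x ∈ S ∨ x⁻¹ ∈ S) ∧ l.prod = g}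

/-- Word metric. -/
def wordDist {G : Type*} [Group G] (S : Set G) (g h : G) : ℕ :=
  wordLength S (g⁻¹ * h)

end

noncomputable section

/-- The dyadic encoding of `n`: the configuration whose lamp at position
`i ≥ 0` is the `i`-th binary digit of `n` (and `0` at negative positions). -/
def dyadic (n : ℕ) : ℤ →₀ ZMod 2 :=
  (Finset.range (n + 1)).sum fun i =>
    if n.testBit i then Finsupp.single (i : ℤ) 1 else 0

open Multiplicative

lemma zmod2_cases (x : ZMod 2) : x = 0 ∨ x = 1 := by revert x; decide

lemma dyadic_apply_nat (n i : ℕ) :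
    dyadic n (i : ℤ) = if n.testBit i then 1 else 0 := by
  unfold dyadic
  rw [Finsupp.finset_sum_apply]
  by_cases hi : i < n + 1
  · rw [Finset.sum_eq_single i]
    · split <;> simp
    · intro j _ hne
      have : (j : ℤ) ≠ (i : ℤ) := by exact_mod_cast hne
      split
      · simp [Finsupp.single_apply, this]
      · simp
    · intro h; exact absurd (Finset.mem_range.mpr hi) h
  · have hbit : n.testBit i = false := by
      apply Nat.testBit_eq_false_of_lt
      calc n < n + 1 := Nat.lt_succ_self n
        _ ≤ i := Nat.le_of_not_lt hi
        _ < 2 ^ i := Nat.lt_two_pow_self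
    rw [hbit, if_neg (by simp)]
    apply Finset.sum_eq_zero
    intro j hj
    have : (j : ℤ) ≠ (i : ℤ) := by
      have := Finset.mem_range.mp hj; omega
    split
    · simp [Finsupp.single_apply, this]
    · simp

lemma dyadic_apply_neg (n : ℕ) (j : ℤ) (h : j < 0) : dyadic n j = 0 := by
  unfold dyadic
  rw [Finsupp.finset_sum_apply]
  apply Finset.sum_eq_zero
  intro i _
  have : (i : ℤ) ≠ j := by omega
  split
  · simp [Finsupp.single_apply, this]
  · simp

lemma exists_word (m : ℕ) : ∀ (f : ℤ →₀ ZMod 2),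
    (∀ j : ℤ, f j ≠ 0 → ∃ i : ℕ, j = (i : ℤ) ∧ i ≤ m) →
    ∃ l : List Lamp, l.length ≤ 3 * m + 1 ∧
      (∀ x ∈ l, x ∈ ({lampA, lampT} : Set Lamp) ∨ x⁻¹ ∈ ({lampA, lampT} : Set Lamp)) ∧
      l.prod = SemidirectProduct.inl (Multiplicative.ofAdd f) := by
  induction m with
  | zero =>
    intro f hf
    have hf0 : f = Finsupp.single 0 (f 0) := by
      ext j
      by_cases hj : j = 0
      · simp [hj]
      · have : f j = 0 := by
          by_contra h
          obtain ⟨i, rfl, hi⟩ := hf j h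
          interval_cases i
          exact hj rfl
        simp [Finsupp.single_apply, Ne.symm hj, hj, this]
    rcases zmod2_cases (f 0) with h | h
    · refine ⟨[], by simp, by simp, ?_⟩
      rw [hf0, h]
      simp
    · refine ⟨[lampA], by simp, by simp, ?_⟩
      rw [hf0, h]
      simp [lampA]
  | succ m ih =>
    intro f hf
    set f' : ℤ →₀ ZMod 2 := f - Finsupp.single 0 (f 0) with hf'
    set g : ℤ →₀ ZMod 2 := lampShift.symm f' with hg
    have hgval : ∀ j : ℤ, g j = f' (j + 1) := by
      intro j
      simp [hg, lampShift, Finsupp.domCongr_apply]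
    have hgsupp : ∀ j : ℤ, g j ≠ 0 → ∃ i : ℕ, j = (i : ℤ) ∧ i ≤ m := by
      intro j hj
      rw [hgval] at hj
      have hne0 : j + 1 ≠ 0 := by
        intro h
        apply hj
        simp [hf', h]
      have hfj : f (j + 1) ≠ 0 := by
        intro h
        apply hj
        simp [hf', Finsupp.single_apply, Ne.symm hne0, hne0, h]
      obtain ⟨i, hji, hi⟩ := hf _ hfj
      have hi1 : 1 ≤ i := by omega
      exact ⟨i - 1, by omega, by omega⟩
    obtain ⟨lg, hlen, hmem, hprod⟩ := ih g hgsupp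
    have hshift : lampT * SemidirectProduct.inl (ofAdd g) * lampT⁻¹
        = SemidirectProduct.inl (ofAdd f') := by
      rw [lampT, ← map_inv, ← SemidirectProduct.inl_aut]
      congr 1
      show lampAct (ofAdd (1 : ℤ)) (ofAdd g) = ofAdd f'
      have : lampAct (ofAdd (1 : ℤ)) = AddEquiv.toMultiplicative lampShift := by
        simp [lampAct]
      rw [this]
      show ofAdd (lampShift g) = ofAdd f'
      rw [hg, lampShift.apply_symm_apply]
    set l0 : List Lamp := if f 0 = 1 then [lampA] else [] with hl0
    have hl0prod : l0.prod = SemidirectProduct.inl (ofAdd (Finsupp.single 0 (f 0))) := by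
      rcases zmod2_cases (f 0) with h | h
      · simp [hl0, h]
      · simp [hl0, h, lampA]
    refine ⟨l0 ++ [lampT] ++ lg ++ [lampT⁻¹], ?_, ?_, ?_⟩
    · have : l0.length ≤ 1 := by rcases zmod2_cases (f 0) with h | h <;> simp [hl0, h]
      simp only [List.length_append, List.length_cons, List.length_nil]
      omega
    · intro x hx
      simp only [List.mem_append, List.mem_singleton] at hx
      rcases hx with ((hx | hx) | hx) | hx
      · left
        rcases zmod2_cases (f 0) with h | h <;> simp [hl0, h] at hx
        simp [hx]
      · left; simp [hx]
      · exact hmem x hx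
      · right; simp [hx]
    · have hfin : l0.prod * (lampT * (lg.prod * lampT⁻¹))
          = SemidirectProduct.inl (ofAdd f) := by
        rw [hl0prod, hprod, ← mul_assoc lampT, hshift, ← map_mul, ← ofAdd_add]
        congr 2
        simp [hf']
      simpa only [List.prod_append, List.prod_cons, List.prod_nil, mul_one,
        mul_assoc] using hfin

theorem lamplighter_dyadic_step' (n : ℕ) :
    wordDist ({lampA, lampT} : Set Lamp)
        (lampElt (dyadic n) 0) (lampElt (dyadic (n + 1)) 0) ≤
      4 * (Nat.log 2 (n + 1) + 1) + 2 := by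
  set m := Nat.log 2 (n + 1) with hm
  set f : ℤ →₀ ZMod 2 := dyadic (n + 1) - dyadic n with hf
  have hgoal : (lampElt (dyadic n) 0)⁻¹ * lampElt (dyadic (n + 1)) 0
      = SemidirectProduct.inl (ofAdd f) := by
    simp only [lampElt, ofAdd_zero, map_one, mul_one]
    rw [← map_inv, ← map_mul]
    congr 1
    rw [← ofAdd_neg, ← ofAdd_add, hf]
    congr 1
    abel
  have hsupp : ∀ j : ℤ, f j ≠ 0 → ∃ i : ℕ, j = (i : ℤ) ∧ i ≤ m := by
    intro j hj
    rcases j with i | i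
    · refine ⟨i, rfl, ?_⟩
      by_contra hi
      apply hj
      have h1 : n + 1 < 2 ^ i := by
        apply Nat.lt_pow_of_log_lt one_lt_two
        omega
      have e1 : (n + 1).testBit i = false := Nat.testBit_eq_false_of_lt h1
      have e2 : n.testBit i = false := Nat.testBit_eq_false_of_lt (by omega)
      simp [hf, Finsupp.sub_apply, Int.ofNat_eq_natCast, dyadic_apply_nat, e1, e2]
    · exfalso
      apply hj
      have hneg : Int.negSucc i < 0 := Int.negSucc_lt_zero i
      simp [hf, Finsupp.sub_apply, dyadic_apply_neg _ _ hneg]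
  obtain ⟨l, hlen, hmem, hprod⟩ := exists_word m f hsupp
  have : wordDist ({lampA, lampT} : Set Lamp)
      (lampElt (dyadic n) 0) (lampElt (dyadic (n + 1)) 0) ≤ l.length := by
    apply Nat.sInf_le
    exact ⟨l, rfl, hmem, by rw [hprod, ← hgoal]⟩
  omega

/-- consecutive dyadic configurations are at word distance at
most `4(⌊log₂(n+1)⌋ + 1) + 2`. -/
theorem lamplighter_dyadic_step (n : ℕ) :
    wordDist ({lampA, lampT} : Set Lamp)
        (lampElt (dyadic n) 0) (lampElt (dyadic (n + 1)) 0) ≤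
      4 * (Nat.log 2 (n + 1) + 1) + 2 := by
  exact lamplighter_dyadic_step' n

end
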